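/- For every T ≥ 1, the periodic Gaussian φ_p is differentiable on ℝ and its derivative satisfies φ_p′(x) ≥ −T²·x·exp(−T²x²/2) for all x ∈ [0, π]. -/

import Mathlib

open Real Set

noncomputable section

/-- The (unnormalized) `2π`-periodization of the Gaussian `x ↦ exp(-x²T²/2)`. -/
def periodicGaussSum (T x : ℝ) : ℝ :=
  ∑' j : ℤ, Real.exp (-((x + 2 * π * j) ^ 2 * T ^ 2) / 2)

/-- The normalizing constant `W = (Σ_{j∈ℤ} exp(-2π²j²T²))⁻¹`, so that `φ_p(0) = 1`. -/
def Wconst (T : ℝ) : ℝ := (∑' j : ℤ, Real.exp (-(2 * π ^ 2 * j ^ 2 * T ^ 2)))⁻¹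

/-- The periodic Gaussian `φ_p(x) = W·Σ_{j∈ℤ} exp(-(x+2πj)²T²/2)`. -/
def phip (T x : ℝ) : ℝ := Wconst T * periodicGaussSum T x

lemma summable_gauss_nat (c b : ℝ) (hc : 0 < c) :
    Summable (fun n : ℕ => Real.exp (-(c * (b + 2 * π * n) ^ 2))) := by
  apply summable_of_isBigO_nat Real.summable_exp_neg_nat
  apply Asymptotics.IsBigO.of_bound 1
  filter_upwards [Filter.eventually_ge_atTop (⌈|b| + c⁻¹⌉₊ + 1)] with n hn
  have h1 : |b| + c⁻¹ ≤ (⌈|b| + c⁻¹⌉₊ : ℝ) := Nat.le_ceil _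
  have h2 : ((⌈|b| + c⁻¹⌉₊ + 1 : ℕ) : ℝ) ≤ (n : ℝ) := by exact_mod_cast hn
  push_cast at h2
  have hcinv : 0 ≤ c⁻¹ := by positivity
  have hbabs : 0 ≤ |b| := abs_nonneg b
  have hbn : |b| ≤ (n : ℝ) := by linarith
  have hcn : (1 : ℝ) ≤ c * n := by
    have : c⁻¹ ≤ (n : ℝ) := by linarith
    calc (1 : ℝ) = c * c⁻¹ := by field_simp
    _ ≤ c * n := by nlinarith
  have hb : -(n : ℝ) ≤ b := by
    have := neg_abs_le b; linarith
  have hpi : (3 : ℝ) ≤ π := by nlinarith [pi_gt_three]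
  have hkey : (n : ℝ) ≤ c * (b + 2 * π * n) ^ 2 := by
    have hn0 : (0:ℝ) ≤ (n:ℝ) := Nat.cast_nonneg n
    have h3 : (n : ℝ) ≤ b + 2 * π * n := by nlinarith
    nlinarith [sq_nonneg (b + 2*π*n - n)]
  rw [Real.norm_eq_abs, Real.norm_eq_abs, abs_of_pos (Real.exp_pos _),
    abs_of_pos (Real.exp_pos _), one_mul]
  exact Real.exp_le_exp.mpr (by linarith)

lemma summable_gauss_int (c a : ℝ) (hc : 0 < c) :
    Summable (fun j : ℤ => Real.exp (-(c * (a + 2 * π * j) ^ 2))) := by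
  apply Summable.of_nat_of_neg
  · exact_mod_cast summable_gauss_nat c a hc
  · apply (summable_gauss_nat c (-a) hc).congr
    intro n
    push_cast
    ring_nf

lemma gauss_term_hasDerivAt (T : ℝ) (j : ℤ) (y : ℝ) :
    HasDerivAt (fun x : ℝ => Real.exp (-((x + 2 * π * j) ^ 2 * T ^ 2) / 2))
      (-(T ^ 2 * (y + 2 * π * j)) * Real.exp (-((y + 2 * π * j) ^ 2 * T ^ 2) / 2)) y := by
  have h0 : HasDerivAt (fun x : ℝ => x + 2 * π * j) 1 y := (hasDerivAt_id y).add_const _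
  have h1 : HasDerivAt (fun x : ℝ => -((x + 2 * π * j) ^ 2 * T ^ 2) / 2)
      (-(T ^ 2 * (y + 2 * π * j))) y := by
    have h2 := ((h0.pow 2).mul_const (T ^ 2)).neg.div_const 2
    exact h2.congr_deriv (by push_cast; ring)
  have := h1.exp
  convert this using 1
  ring

lemma norm_deriv_term_le (T : ℝ) (hT : 1 ≤ T) (x₀ : ℝ) (j : ℤ) (y : ℝ)
    (hy : y ∈ Ioo (x₀ - 1) (x₀ + 1)) :
    ‖-(T ^ 2 * (y + 2 * π * j)) * Real.exp (-((y + 2 * π * j) ^ 2 * T ^ 2) / 2)‖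
      ≤ 2 * T * Real.exp (4⁻¹) * Real.exp (-(8⁻¹ * (x₀ + 2 * π * j) ^ 2)) := by
  have hT0 : (0 : ℝ) < T := lt_of_lt_of_le one_pos hT
  set t := y + 2 * π * (j:ℝ) with ht
  clear_value t
  have hnorm : ‖-(T ^ 2 * t) * Real.exp (-(t ^ 2 * T ^ 2) / 2)‖
      = T ^ 2 * |t| * Real.exp (-(t ^ 2 * T ^ 2) / 2) := by
    rw [norm_mul, norm_neg, Real.norm_eq_abs, Real.norm_eq_abs, abs_mul, Real.abs_exp,
      abs_of_nonneg (sq_nonneg T)]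
  rw [hnorm]
  have e1 : Real.exp (-(t ^ 2 * T ^ 2) / 2)
      = Real.exp (-(t ^ 2 * T ^ 2 / 4)) * Real.exp (-(t ^ 2 * T ^ 2 / 4)) := by
    rw [← Real.exp_add]; ring_nf
  have S1 : T ^ 2 * |t| * Real.exp (-(t ^ 2 * T ^ 2 / 4)) ≤ 2 * T := by
    rcases le_or_gt (|t| * T) 2 with h | h
    · have he1 : Real.exp (-(t ^ 2 * T ^ 2 / 4)) ≤ 1 := by
        apply Real.exp_le_one_iff.mpr; nlinarith [sq_nonneg t]
      calc T ^ 2 * |t| * Real.exp (-(t ^ 2 * T ^ 2 / 4)) ≤ T ^ 2 * |t| * 1 :=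
            mul_le_mul_of_nonneg_left he1 (by positivity)
        _ = T * (|t| * T) := by ring
        _ ≤ T * 2 := mul_le_mul_of_nonneg_left h hT0.le
        _ = 2 * T := by ring
    · have hE := Real.add_one_le_exp (t ^ 2 * T ^ 2 / 4)
      have hEpos : 0 < Real.exp (t ^ 2 * T ^ 2 / 4) := Real.exp_pos _
      rw [Real.exp_neg, ← div_eq_mul_inv, div_le_iff₀ hEpos]
      nlinarith [hE, sq_abs t, abs_nonneg t,
        mul_nonneg (mul_nonneg (mul_nonneg hT0.le hT0.le) (abs_nonneg t))
          (le_of_lt (sub_pos.mpr h))]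
  have S2 : Real.exp (-(t ^ 2 * T ^ 2 / 4)) ≤ Real.exp (4⁻¹) * Real.exp (-(8⁻¹ * (x₀ + 2 * π * j) ^ 2)) := by
    rw [← Real.exp_add]
    apply Real.exp_le_exp.mpr
    obtain ⟨hy1, hy2⟩ := hy
    have hxj : x₀ + 2 * π * j = t + (x₀ - y) := by rw [ht]; ring
    have hsq : (x₀ + 2 * π * j) ^ 2 ≤ 2 * t ^ 2 + 2 * (x₀ - y) ^ 2 := by
      rw [hxj]; nlinarith [sq_nonneg (t - (x₀ - y))]
    have h1 : (x₀ - y) ^ 2 ≤ 1 := by nlinarith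
    have hT2 : (1 : ℝ) ≤ T ^ 2 := by nlinarith
    have htT : t ^ 2 ≤ t ^ 2 * T ^ 2 := by nlinarith [mul_le_mul_of_nonneg_left hT2 (sq_nonneg t)]
    linarith
  calc T ^ 2 * |t| * Real.exp (-(t ^ 2 * T ^ 2) / 2)
      = (T ^ 2 * |t| * Real.exp (-(t ^ 2 * T ^ 2 / 4))) * Real.exp (-(t ^ 2 * T ^ 2 / 4)) := by
        rw [e1]; ring
    _ ≤ (2 * T) * (Real.exp (4⁻¹) * Real.exp (-(8⁻¹ * (x₀ + 2 * π * j) ^ 2))) := by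
        apply mul_le_mul S1 S2 (Real.exp_nonneg _) (by positivity)
    _ = 2 * T * Real.exp (4⁻¹) * Real.exp (-(8⁻¹ * (x₀ + 2 * π * j) ^ 2)) := by ring

lemma key_ineq (T A B : ℝ) (hT : 1 ≤ T) (hB : π ≤ B) (hAB : B ≤ A) (hsum : 4 * π ≤ A + B) :
    A * Real.exp (-(A ^ 2 * T ^ 2) / 2) ≤ B * Real.exp (-(B ^ 2 * T ^ 2) / 2) := by
  have hpi : (3 : ℝ) ≤ π := by nlinarith [pi_gt_three]
  have hB0 : 0 < B := by linarith
  have hA0 : 0 < A := by linarith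
  set D := (A ^ 2 - B ^ 2) * T ^ 2 / 2 with hD
  clear_value D
  have hD0 : 0 ≤ D := by
    rw [hD]
    nlinarith [mul_nonneg (mul_nonneg (sub_nonneg.mpr hAB) (show (0:ℝ) ≤ A + B by linarith)) (sq_nonneg T)]
  have h1 : Real.exp (-(A ^ 2 * T ^ 2) / 2) * Real.exp D = Real.exp (-(B ^ 2 * T ^ 2) / 2) := by
    rw [← Real.exp_add]; congr 1; rw [hD]; ring
  have h2 : D + 1 ≤ Real.exp D := Real.add_one_le_exp D
  have hkey : A ≤ B * (1 + D) := by
    have hT2 : (1 : ℝ) ≤ T ^ 2 := by nlinarith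
    have h36 : (36 : ℝ) ≤ B * (A + B) := by
      nlinarith [mul_le_mul (show (3:ℝ) ≤ B by linarith) (show (12:ℝ) ≤ A + B by linarith)
        (by norm_num) (show (0:ℝ) ≤ B by linarith)]
    have hBsum : (0 : ℝ) ≤ B * (A + B) * T ^ 2 / 2 - 1 := by
      nlinarith [mul_le_mul_of_nonneg_left hT2 (show (0:ℝ) ≤ B * (A + B) by linarith)]
    have hfact : 0 ≤ (A - B) * (B * (A + B) * T ^ 2 / 2 - 1) :=
      mul_nonneg (by linarith) hBsum
    rw [hD]; nlinarith [hfact]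
  calc A * Real.exp (-(A ^ 2 * T ^ 2) / 2)
      ≤ (B * (1 + D)) * Real.exp (-(A ^ 2 * T ^ 2) / 2) :=
        mul_le_mul_of_nonneg_right hkey (Real.exp_nonneg _)
    _ ≤ (B * Real.exp D) * Real.exp (-(A ^ 2 * T ^ 2) / 2) := by
        apply mul_le_mul_of_nonneg_right _ (Real.exp_nonneg _)
        exact mul_le_mul_of_nonneg_left (by linarith) hB0.le
    _ = B * (Real.exp (-(A ^ 2 * T ^ 2) / 2) * Real.exp D) := by ring
    _ = B * Real.exp (-(B ^ 2 * T ^ 2) / 2) := by rw [h1]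

lemma pair_nonneg (T x k : ℝ) (hT : 1 ≤ T) (hx0 : 0 ≤ x) (hxpi : x ≤ π) (hk : 1 ≤ k) :
    0 ≤ -(T ^ 2 * (x + 2 * π * k)) * Real.exp (-((x + 2 * π * k) ^ 2 * T ^ 2) / 2)
        + -(T ^ 2 * (x + 2 * π * (-k))) * Real.exp (-((x + 2 * π * (-k)) ^ 2 * T ^ 2) / 2) := by
  have hpi : (3 : ℝ) ≤ π := by nlinarith [pi_gt_three]
  have e1 : x + 2 * π * (-k) = -(2 * π * k - x) := by ring
  rw [e1]
  have hBpi : π ≤ 2 * π * k - x := by nlinarith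
  have hAB : 2 * π * k - x ≤ x + 2 * π * k := by linarith
  have hsum : 4 * π ≤ (x + 2 * π * k) + (2 * π * k - x) := by nlinarith
  have hkey := key_ineq T (x + 2 * π * k) (2 * π * k - x) hT hBpi hAB hsum
  have hsq : (-(2 * π * k - x)) ^ 2 = (2 * π * k - x) ^ 2 := by ring
  rw [hsq]
  have hT2 : (0 : ℝ) < T ^ 2 := by positivity
  nlinarith [hkey]

lemma hasDerivAt_periodicGaussSum (T : ℝ) (hT : 1 ≤ T) (x : ℝ) :
    HasDerivAt (periodicGaussSum T)
      (∑' j : ℤ, -(T ^ 2 * (x + 2 * π * j))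
        * Real.exp (-((x + 2 * π * j) ^ 2 * T ^ 2) / 2)) x := by
  have hmem : x ∈ Ioo (x - 1) (x + 1) := by constructor <;> linarith
  have hu : Summable (fun j : ℤ =>
      2 * T * Real.exp (4⁻¹) * Real.exp (-(8⁻¹ * (x + 2 * π * j) ^ 2))) :=
    (summable_gauss_int 8⁻¹ x (by norm_num)).mul_left _
  have hg0 : Summable (fun j : ℤ => Real.exp (-((x + 2 * π * j) ^ 2 * T ^ 2) / 2)) := by
    apply (summable_gauss_int (T ^ 2 / 2) x (by positivity)).congr
    intro j
    congr 1
    ring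
  have := hasDerivAt_tsum_of_isPreconnected hu (isOpen_Ioo (a := x - 1) (b := x + 1))
    (isPreconnected_Ioo)
    (fun j y _ => gauss_term_hasDerivAt T j y)
    (fun j y hy => norm_deriv_term_le T hT x j y hy)
    hmem hg0 hmem
  exact this

theorem periodicGaussian_deriv_bound (T : ℝ) (hT : 1 ≤ T) :
    Differentiable ℝ (phip T) ∧
      ∀ x ∈ Icc (0 : ℝ) π, -(T ^ 2 * x * Real.exp (-(T ^ 2 * x ^ 2) / 2)) ≤ deriv (phip T) x := by
  have hphipD : ∀ x : ℝ, HasDerivAt (phip T)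
      (Wconst T * ∑' j : ℤ, -(T ^ 2 * (x + 2 * π * j))
        * Real.exp (-((x + 2 * π * j) ^ 2 * T ^ 2) / 2)) x := by
    intro x
    exact (hasDerivAt_periodicGaussSum T hT x).const_mul (Wconst T)
  refine ⟨fun x => ((hphipD x).differentiableAt : DifferentiableAt ℝ (phip T) x), ?_⟩
  rintro x ⟨hx0, hxpi⟩
  rw [(hphipD x).deriv]
  -- abbreviate
  set F : ℤ → ℝ := fun j => -(T ^ 2 * (x + 2 * π * j))
    * Real.exp (-((x + 2 * π * j) ^ 2 * T ^ 2) / 2) with hF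
  -- bounds on Wconst
  have hS0sum : Summable (fun j : ℤ => Real.exp (-(2 * π ^ 2 * j ^ 2 * T ^ 2))) := by
    apply (summable_gauss_int (T ^ 2 / 2) 0 (by positivity)).congr
    intro j
    congr 1
    ring
  have hS0ge1 : (1 : ℝ) ≤ ∑' j : ℤ, Real.exp (-(2 * π ^ 2 * j ^ 2 * T ^ 2)) := by
    have := Summable.le_tsum hS0sum 0 (fun j _ => (Real.exp_pos _).le)
    simpa using this
  have hW0 : 0 < Wconst T := by
    rw [Wconst]
    exact inv_pos.mpr (by linarith)
  have hW1 : Wconst T ≤ 1 := by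
    rw [Wconst]
    exact inv_le_one_of_one_le₀ hS0ge1
  -- summability of the derivative series at x
  have hmem : x ∈ Ioo (x - 1) (x + 1) := by constructor <;> linarith
  have hu : Summable (fun j : ℤ =>
      2 * T * Real.exp (4⁻¹) * Real.exp (-(8⁻¹ * (x + 2 * π * j) ^ 2))) :=
    (summable_gauss_int 8⁻¹ x (by norm_num)).mul_left _
  have hFsum : Summable F :=
    Summable.of_norm_bounded hu (fun j => norm_deriv_term_le T hT x j x hmem)
  -- split the sum over ℤ
  have hf₁ : Summable (fun n : ℕ => F n) := hFsum.comp_injective (fun a b h => by exact_mod_cast h)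
  have hf₂ : Summable (fun n : ℕ => F (-(n + 1))) := by
    apply hFsum.comp_injective
    intro a b h
    simpa using h
  have hf₁' : Summable (fun n : ℕ => F (n + 1)) := by
    have := (summable_nat_add_iff 1).mpr hf₁
    apply this.congr
    intro n
    push_cast
    rfl
  have hsplit : ∑' j : ℤ, F j = (∑' n : ℕ, F n) + ∑' n : ℕ, F (-(n + 1)) :=
    tsum_of_nat_of_neg_add_one hf₁ hf₂
  have hzero : ∑' n : ℕ, F n = F 0 + ∑' n : ℕ, F (n + 1) := by
    rw [Summable.tsum_eq_zero_add hf₁]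
    congr 1
  have hpairs : 0 ≤ ∑' n : ℕ, (F (n + 1) + F (-(n + 1))) := by
    apply tsum_nonneg
    intro n
    have hk : (1 : ℝ) ≤ (n : ℝ) + 1 := by
      have : (0 : ℝ) ≤ (n : ℝ) := Nat.cast_nonneg n
      linarith
    have hp := pair_nonneg T x ((n : ℝ) + 1) hT hx0 hxpi hk
    have e : F ((n : ℤ) + 1) + F (-((n : ℤ) + 1))
        = -(T ^ 2 * (x + 2 * π * ((n : ℝ) + 1)))
            * Real.exp (-((x + 2 * π * ((n : ℝ) + 1)) ^ 2 * T ^ 2) / 2)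
          + -(T ^ 2 * (x + 2 * π * (-((n : ℝ) + 1))))
            * Real.exp (-((x + 2 * π * (-((n : ℝ) + 1))) ^ 2 * T ^ 2) / 2) := by
      rw [hF]
      push_cast
      ring_nf
    rw [show ((-(n + 1) : ℤ)) = -((n : ℤ) + 1) by ring] at *
    rw [e]
    exact hp
  have hadd : (∑' n : ℕ, F (n + 1)) + ∑' n : ℕ, F (-(n + 1))
      = ∑' n : ℕ, (F (n + 1) + F (-(n + 1))) := (Summable.tsum_add hf₁' hf₂).symm
  have hSgeF0 : F 0 ≤ ∑' j : ℤ, F j := by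
    rw [hsplit, hzero]
    have : F 0 + ((∑' n : ℕ, F (n + 1)) + ∑' n : ℕ, F (-(n + 1)))
        = F 0 + ∑' n : ℕ, (F (n + 1) + F (-(n + 1))) := by rw [hadd]
    linarith [hpairs, this.ge, this.le]
  have hF0eq : F 0 = -(T ^ 2 * x * Real.exp (-(T ^ 2 * x ^ 2) / 2)) := by
    rw [hF]
    push_cast
    ring_nf
  have hF0le : F 0 ≤ 0 := by
    rw [hF0eq]
    have : 0 ≤ T ^ 2 * x * Real.exp (-(T ^ 2 * x ^ 2) / 2) := by positivity
    linarith
  rw [← hF0eq]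
  have h1 : 0 ≤ Wconst T * (∑' j : ℤ, F j - F 0) :=
    mul_nonneg hW0.le (by linarith)
  have h2 : 0 ≤ (-F 0) * (1 - Wconst T) :=
    mul_nonneg (by linarith) (by linarith)
  nlinarith [h1, h2]

end
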